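/- Let n ≥ 2 and let ∇ = ∇⁰ + Γ be a symplectic connection on (ℝ^{2n},Ω) (not assumed of Ricci type), with curvature R and Ricci tensor r. Suppose there exists a smooth 1-form u : ℝ^{2n} → V* such that (∇_X r)(x)(Y,Z) = (1/(2n+1))·(Ω(X,Y)u(x)(Z) + Ω(X,Z)u(x)(Y)) for all x,X,Y,Z. Then the 'Weyl' part W = R − E of the curvature satisfies the cyclic identity: for all x and all X,Y,Z,T,S ∈ V, (∇_X W)(x)(Y,Z;T,S) + (∇_Y W)(x)(Z,X;T,S) + (∇_Z W)(x)(X,Y;T,S) = 0. -/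

import Mathlib

noncomputable section

/-- The standard symplectic form on `ℝ^{2n}`. -/
def Omega (n : ℕ) (x y : Fin (2*n) → ℝ) : ℝ :=
  ∑ i : Fin n, (x ⟨i.1, by have := i.isLt; omega⟩ * y ⟨n + i.1, by have := i.isLt; omega⟩
    - x ⟨n + i.1, by have := i.isLt; omega⟩ * y ⟨i.1, by have := i.isLt; omega⟩)

/-- The curvature of `∇ = ∇⁰ + Γ`. -/
def curv (n : ℕ) (Γ : (Fin (2*n) → ℝ) → (Fin (2*n) → ℝ) →L[ℝ] (Fin (2*n) → ℝ) →L[ℝ] (Fin (2*n) → ℝ))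
    (x X Y : Fin (2*n) → ℝ) : (Fin (2*n) → ℝ) →L[ℝ] (Fin (2*n) → ℝ) :=
  fderiv ℝ Γ x X Y - fderiv ℝ Γ x Y X + (Γ x X).comp (Γ x Y) - (Γ x Y).comp (Γ x X)

/-- The Ricci tensor `r(x)(X,Y) = Tr(Z ↦ R(x)(X,Z)Y)`. -/
def ricci (n : ℕ) (Γ : (Fin (2*n) → ℝ) → (Fin (2*n) → ℝ) →L[ℝ] (Fin (2*n) → ℝ) →L[ℝ] (Fin (2*n) → ℝ))
    (x X Y : Fin (2*n) → ℝ) : ℝ :=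
  ∑ a : Fin (2*n), curv n Γ x X (Pi.single a 1) Y a

/-- The covariant derivative of the Ricci tensor. -/
def nablaRicci (n : ℕ)
    (Γ : (Fin (2*n) → ℝ) → (Fin (2*n) → ℝ) →L[ℝ] (Fin (2*n) → ℝ) →L[ℝ] (Fin (2*n) → ℝ))
    (x X Y Z : Fin (2*n) → ℝ) : ℝ :=
  fderiv ℝ (fun p => ricci n Γ p Y Z) x X - ricci n Γ x (Γ x X Y) Z - ricci n Γ x Y (Γ x X Z)

/-- The Ricci part `E` of the curvature tensor. -/
def Epart (n : ℕ)
    (Γ : (Fin (2*n) → ℝ) → (Fin (2*n) → ℝ) →L[ℝ] (Fin (2*n) → ℝ) →L[ℝ] (Fin (2*n) → ℝ))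
    (x X Y Z T : Fin (2*n) → ℝ) : ℝ :=
  -(1/(2*((n:ℝ)+1))) * (2 * Omega n X Y * ricci n Γ x Z T
    + Omega n X Z * ricci n Γ x Y T + Omega n X T * ricci n Γ x Y Z
    - Omega n Y Z * ricci n Γ x X T - Omega n Y T * ricci n Γ x X Z)

/-- The 'Weyl' part `W = R − E` of the curvature tensor. -/
def Wpart (n : ℕ)
    (Γ : (Fin (2*n) → ℝ) → (Fin (2*n) → ℝ) →L[ℝ] (Fin (2*n) → ℝ) →L[ℝ] (Fin (2*n) → ℝ))
    (x X Y Z T : Fin (2*n) → ℝ) : ℝ :=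
  Omega n (curv n Γ x X Y Z) T - Epart n Γ x X Y Z T

/-- The covariant derivative of the 4-tensor `W`:
`(∇_X W)(x)(Y,Z;T,S) = D_X(W(·)(Y,Z;T,S))(x) − W(x)(Γ(x)(X)Y,Z;T,S) − W(x)(Y,Γ(x)(X)Z;T,S)
− W(x)(Y,Z;Γ(x)(X)T,S) − W(x)(Y,Z;T,Γ(x)(X)S)`. -/
def nablaW (n : ℕ)
    (Γ : (Fin (2*n) → ℝ) → (Fin (2*n) → ℝ) →L[ℝ] (Fin (2*n) → ℝ) →L[ℝ] (Fin (2*n) → ℝ))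
    (x X Y Z T S : Fin (2*n) → ℝ) : ℝ :=
  fderiv ℝ (fun p => Wpart n Γ p Y Z T S) x X
    - Wpart n Γ x (Γ x X Y) Z T S - Wpart n Γ x Y (Γ x X Z) T S
    - Wpart n Γ x Y Z (Γ x X T) S - Wpart n Γ x Y Z T (Γ x X S)

namespace SymplecticWeylAux

variable {n : ℕ} {Γ : (Fin (2*n) → ℝ) → (Fin (2*n) → ℝ) →L[ℝ] (Fin (2*n) → ℝ) →L[ℝ] (Fin (2*n) → ℝ)}

set_option maxHeartbeats 2000000

instance instNACG3 : NormedAddCommGroup ((Fin (2*n) → ℝ) →L[ℝ] (Fin (2*n) → ℝ) →L[ℝ] (Fin (2*n) → ℝ) →L[ℝ] (Fin (2*n) → ℝ)) :=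
  ContinuousLinearMap.toNormedAddCommGroup (𝕜 := ℝ) (𝕜₂ := ℝ) (σ₁₂ := RingHom.id ℝ) (E := Fin (2*n) → ℝ)
    (F := (Fin (2*n) → ℝ) →L[ℝ] (Fin (2*n) → ℝ) →L[ℝ] (Fin (2*n) → ℝ))

instance instNS3 : NormedSpace ℝ ((Fin (2*n) → ℝ) →L[ℝ] (Fin (2*n) → ℝ) →L[ℝ] (Fin (2*n) → ℝ) →L[ℝ] (Fin (2*n) → ℝ)) :=
  ContinuousLinearMap.toNormedSpace (𝕜 := ℝ) (𝕜₂ := ℝ) (σ₁₂ := RingHom.id ℝ) (E := Fin (2*n) → ℝ)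
    (F := (Fin (2*n) → ℝ) →L[ℝ] (Fin (2*n) → ℝ) →L[ℝ] (Fin (2*n) → ℝ))

lemma omega_swap (n : ℕ) (x y : Fin (2*n) → ℝ) : Omega n x y = -Omega n y x := by
  unfold Omega
  rw [← Finset.sum_neg_distrib]
  exact Finset.sum_congr rfl (fun i _ => by ring)

def omegaCLM (n : ℕ) (y : Fin (2*n) → ℝ) : (Fin (2*n) → ℝ) →L[ℝ] ℝ :=
  LinearMap.toContinuousLinearMap
    { toFun := fun x => Omega n x y
      map_add' := by
        intro a b
        unfold Omega
        rw [← Finset.sum_add_distrib]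
        exact Finset.sum_congr rfl (fun i _ => by simp [Pi.add_apply]; ring)
      map_smul' := by
        intro c a
        simp only [RingHom.id_apply, smul_eq_mul]
        unfold Omega
        rw [Finset.mul_sum]
        exact Finset.sum_congr rfl (fun i _ => by simp [Pi.smul_apply, smul_eq_mul]; ring) }

@[simp] lemma omegaCLM_apply (n : ℕ) (y x : Fin (2*n) → ℝ) :
    omegaCLM n y x = Omega n x y := rfl

lemma omega_add_left (n : ℕ) (a b y : Fin (2*n) → ℝ) :
    Omega n (a + b) y = Omega n a y + Omega n b y := map_add (omegaCLM n y) a b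

lemma omega_sub_left (n : ℕ) (a b y : Fin (2*n) → ℝ) :
    Omega n (a - b) y = Omega n a y - Omega n b y := map_sub (omegaCLM n y) a b

lemma omega_neg_left (n : ℕ) (a y : Fin (2*n) → ℝ) :
    Omega n (-a) y = - Omega n a y := map_neg (omegaCLM n y) a

@[simp] lemma omega_zero_left (n : ℕ) (y : Fin (2*n) → ℝ) :
    Omega n 0 y = 0 := map_zero (omegaCLM n y)


lemma omega_single_hi (n : ℕ) (v : Fin (2*n) → ℝ) (k : Fin n) :
    Omega n v (Pi.single (M := fun _ : Fin (2*n) => ℝ) (⟨n + k.1, by omega⟩ : Fin (2*n)) 1) = v ⟨k.1, by have := k.isLt; omega⟩ := by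
  unfold Omega
  rw [Finset.sum_eq_single k]
  · have h1 : (Pi.single (M := fun _ : Fin (2*n) => ℝ) (⟨n + k.1, by omega⟩ : Fin (2*n)) (1:ℝ)) ⟨n + k.1, by have := k.isLt; omega⟩ = 1 := by
      simp [Pi.single_apply]
    have h2 : (Pi.single (M := fun _ : Fin (2*n) => ℝ) (⟨n + k.1, by omega⟩ : Fin (2*n)) (1:ℝ)) ⟨k.1, by have := k.isLt; omega⟩ = 0 := by
      have := k.isLt
      simp [Pi.single_apply, Fin.mk.injEq]
      omega
    rw [h1, h2]; ring
  · intro b _ hbk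
    have hb := b.isLt
    have h1 : (Pi.single (M := fun _ : Fin (2*n) => ℝ) (⟨n + k.1, by omega⟩ : Fin (2*n)) (1:ℝ)) ⟨n + b.1, by omega⟩ = 0 := by
      simp [Pi.single_apply, Fin.mk.injEq]
      intro h; exact absurd (Fin.ext (by omega : b.1 = k.1)) hbk
    have h2 : (Pi.single (M := fun _ : Fin (2*n) => ℝ) (⟨n + k.1, by omega⟩ : Fin (2*n)) (1:ℝ)) ⟨b.1, by omega⟩ = 0 := by
      simp [Pi.single_apply, Fin.mk.injEq]
      omega
    rw [h1, h2]; ring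
  · simp

lemma omega_single_lo (n : ℕ) (v : Fin (2*n) → ℝ) (k : Fin n) :
    Omega n v (Pi.single (M := fun _ : Fin (2*n) => ℝ) (⟨k.1, by have := k.isLt; omega⟩ : Fin (2*n)) 1)
      = - v ⟨n + k.1, by have := k.isLt; omega⟩ := by
  unfold Omega
  rw [Finset.sum_eq_single k]
  · have hk := k.isLt
    have h1 : (Pi.single (M := fun _ : Fin (2*n) => ℝ) (⟨k.1, by omega⟩ : Fin (2*n)) (1:ℝ)) ⟨n + k.1, by omega⟩ = 0 := by
      simp [Pi.single_apply, Fin.mk.injEq]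
      omega
    have h2 : (Pi.single (M := fun _ : Fin (2*n) => ℝ) (⟨k.1, by omega⟩ : Fin (2*n)) (1:ℝ)) ⟨k.1, by omega⟩ = 1 := by
      simp [Pi.single_apply]
    rw [h1, h2]; ring
  · intro b _ hbk
    have hb := b.isLt
    have hk := k.isLt
    have h1 : (Pi.single (M := fun _ : Fin (2*n) => ℝ) (⟨k.1, by omega⟩ : Fin (2*n)) (1:ℝ)) ⟨n + b.1, by omega⟩ = 0 := by
      simp [Pi.single_apply, Fin.mk.injEq]
      omega
    have h2 : (Pi.single (M := fun _ : Fin (2*n) => ℝ) (⟨k.1, by omega⟩ : Fin (2*n)) (1:ℝ)) ⟨b.1, by omega⟩ = 0 := by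
      simp [Pi.single_apply, Fin.mk.injEq]
      intro h; exact absurd (Fin.ext (by omega : b.1 = k.1)) hbk
    rw [h1, h2]; ring
  · simp

lemma omega_nondeg (n : ℕ) (v : Fin (2*n) → ℝ) (h : ∀ w, Omega n v w = 0) : v = 0 := by
  funext j
  have hj := j.isLt
  by_cases hc : j.1 < n
  · have := h (Pi.single (M := fun _ : Fin (2*n) => ℝ) (⟨n + j.1, by omega⟩ : Fin (2*n)) 1)
    rw [omega_single_hi n v ⟨j.1, hc⟩] at this
    simpa using this
  · have hk : j.1 - n < n := by omega
    have := h (Pi.single (M := fun _ : Fin (2*n) => ℝ) (⟨j.1 - n, by omega⟩ : Fin (2*n)) 1)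
    rw [omega_single_lo n v ⟨j.1 - n, hk⟩] at this
    have hj' : (⟨n + (j.1 - n), by omega⟩ : Fin (2*n)) = j := Fin.ext (show n + (j.1 - n) = j.1 by omega)
    rw [hj'] at this
    simp only [Pi.zero_apply]
    linarith


lemma coe_top_add_one : ((⊤:ℕ∞) : WithTop ℕ∞) + 1 ≤ ((⊤:ℕ∞) : WithTop ℕ∞) := by
  exact_mod_cast le_top
lemma one_le_coe_top : ((⊤:ℕ∞) : WithTop ℕ∞) ≠ 0 := by
  simp



lemma hG' (hΓ : ContDiff ℝ (⊤ : ℕ∞) Γ) : ContDiff ℝ (⊤ : ℕ∞) (fderiv ℝ Γ) := hΓ.fderiv_right coe_top_add_one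

lemma hΓ1 (hΓ : ContDiff ℝ (⊤ : ℕ∞) Γ) (A : Fin (2*n) → ℝ) : ContDiff ℝ (⊤ : ℕ∞) (fun p => Γ p A) :=
  hΓ.clm_apply contDiff_const

lemma hΓ2 (hΓ : ContDiff ℝ (⊤ : ℕ∞) Γ) (A B : Fin (2*n) → ℝ) : ContDiff ℝ (⊤ : ℕ∞) (fun p => Γ p A B) :=
  (hΓ1 hΓ A).clm_apply contDiff_const

lemma hG'1 (hΓ : ContDiff ℝ (⊤ : ℕ∞) Γ) (A : Fin (2*n) → ℝ) : ContDiff ℝ (⊤ : ℕ∞) (fun p => fderiv ℝ Γ p A) :=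
  (hG' hΓ).clm_apply contDiff_const

lemma hG'2 (hΓ : ContDiff ℝ (⊤ : ℕ∞) Γ) (A B : Fin (2*n) → ℝ) : ContDiff ℝ (⊤ : ℕ∞) (fun p => fderiv ℝ Γ p A B) :=
  (hG'1 hΓ A).clm_apply contDiff_const

lemma hG'3 (hΓ : ContDiff ℝ (⊤ : ℕ∞) Γ) (A B C : Fin (2*n) → ℝ) : ContDiff ℝ (⊤ : ℕ∞) (fun p => fderiv ℝ Γ p A B C) :=
  (hG'2 hΓ A B).clm_apply contDiff_const


/-- applying a CLM-valued map to a constant commutes with `fderiv`. -/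
lemma fderiv_app_const {W : Type*} [NormedAddCommGroup W] [NormedSpace ℝ W]
    {F : (Fin (2*n) → ℝ) → (Fin (2*n) → ℝ) →L[ℝ] W} {x : Fin (2*n) → ℝ}
    (hF : DifferentiableAt ℝ F x) (A X : Fin (2*n) → ℝ) :
    fderiv ℝ (fun p => F p A) x X = fderiv ℝ F x X A := by
  rw [fderiv_clm_apply hF (differentiableAt_const A)]
  simp


lemma fderiv_Γ₁ (hΓ : ContDiff ℝ (⊤ : ℕ∞) Γ) (x X A : Fin (2*n) → ℝ) :
    fderiv ℝ (fun p => Γ p A) x X = fderiv ℝ Γ x X A :=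
  fderiv_app_const (hΓ.differentiable one_le_coe_top x) A X

lemma fderiv_Γ₂ (hΓ : ContDiff ℝ (⊤ : ℕ∞) Γ) (x X A B : Fin (2*n) → ℝ) :
    fderiv ℝ (fun p => Γ p A B) x X = fderiv ℝ Γ x X A B := by
  rw [fderiv_app_const ((hΓ1 hΓ A).differentiable one_le_coe_top x) B X, fderiv_Γ₁ hΓ]

lemma fderiv_G'₃ (hΓ : ContDiff ℝ (⊤ : ℕ∞) Γ) (x X A B C : Fin (2*n) → ℝ) :
    fderiv ℝ (fun p => fderiv ℝ Γ p A B C) x X = fderiv ℝ (fderiv ℝ Γ) x X A B C := by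
  rw [fderiv_app_const ((hG'2 hΓ A B).differentiable one_le_coe_top x) C X,
    fderiv_app_const ((hG'1 hΓ A).differentiable one_le_coe_top x) B X,
    fderiv_app_const ((hG' hΓ).differentiable one_le_coe_top x) A X]

/-- symmetry of the second derivative of `Γ`. -/
lemma Hsym (hΓ : ContDiff ℝ (⊤ : ℕ∞) Γ) (x X Y : Fin (2*n) → ℝ) :
    fderiv ℝ (fderiv ℝ Γ) x X Y = fderiv ℝ (fderiv ℝ Γ) x Y X :=
  second_derivative_symmetric (f := Γ) (f' := fderiv ℝ Γ)
    (fun y => (hΓ.differentiable one_le_coe_top y).hasFDerivAt)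
    ((hG' hΓ).differentiable one_le_coe_top x).hasFDerivAt X Y


lemma curv_apply (x Y Z T : Fin (2*n) → ℝ) :
    curv n Γ x Y Z T = fderiv ℝ Γ x Y Z T - fderiv ℝ Γ x Z Y T
      + Γ x Y (Γ x Z T) - Γ x Z (Γ x Y T) := by
  simp [curv]


lemma contDiff_curvT (hΓ : ContDiff ℝ (⊤ : ℕ∞) Γ) (Y Z T : Fin (2*n) → ℝ) :
    ContDiff ℝ (⊤ : ℕ∞) (fun p => curv n Γ p Y Z T) := by
  have e : (fun p => curv n Γ p Y Z T) = fun p =>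
      fderiv ℝ Γ p Y Z T - fderiv ℝ Γ p Z Y T + Γ p Y (Γ p Z T) - Γ p Z (Γ p Y T) :=
    funext fun p => curv_apply p Y Z T
  rw [e]
  exact (((hG'3 hΓ Y Z T).sub (hG'3 hΓ Z Y T)).add
    ((hΓ1 hΓ Y).clm_apply (hΓ2 hΓ Z T))).sub ((hΓ1 hΓ Z).clm_apply (hΓ2 hΓ Y T))

lemma contDiff_ricci (hΓ : ContDiff ℝ (⊤ : ℕ∞) Γ) (A B : Fin (2*n) → ℝ) :
    ContDiff ℝ (⊤ : ℕ∞) (fun p => ricci n Γ p A B) := by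
  unfold ricci
  exact ContDiff.sum fun a _ => contDiff_pi.mp (contDiff_curvT hΓ A (Pi.single a 1) B) a

/-- the derivative of the curvature applied to constant vectors. -/
lemma curvT_fderiv (hΓ : ContDiff ℝ (⊤ : ℕ∞) Γ) (x X Y Z T : Fin (2*n) → ℝ) :
    fderiv ℝ (fun p => curv n Γ p Y Z T) x X =
      fderiv ℝ (fderiv ℝ Γ) x X Y Z T - fderiv ℝ (fderiv ℝ Γ) x X Z Y T
      + fderiv ℝ Γ x X Y (Γ x Z T) + Γ x Y (fderiv ℝ Γ x X Z T)
      - fderiv ℝ Γ x X Z (Γ x Y T) - Γ x Z (fderiv ℝ Γ x X Y T) := by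
  have e : (fun p => curv n Γ p Y Z T) = fun p =>
      (fderiv ℝ Γ p Y Z T - fderiv ℝ Γ p Z Y T + Γ p Y (Γ p Z T)) - Γ p Z (Γ p Y T) :=
    funext fun p => curv_apply p Y Z T
  have d1 : DifferentiableAt ℝ (fun p => fderiv ℝ Γ p Y Z T) x :=
    (hG'3 hΓ Y Z T).differentiable one_le_coe_top x
  have d2 : DifferentiableAt ℝ (fun p => fderiv ℝ Γ p Z Y T) x :=
    (hG'3 hΓ Z Y T).differentiable one_le_coe_top x
  have dΓ1 : ∀ A, DifferentiableAt ℝ (fun p => Γ p A) x := fun A =>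
    (hΓ1 hΓ A).differentiable one_le_coe_top x
  have dΓ2 : ∀ A B, DifferentiableAt ℝ (fun p => Γ p A B) x := fun A B =>
    (hΓ2 hΓ A B).differentiable one_le_coe_top x
  have d3 : DifferentiableAt ℝ (fun p => Γ p Y (Γ p Z T)) x := (dΓ1 Y).clm_apply (dΓ2 Z T)
  have d4 : DifferentiableAt ℝ (fun p => Γ p Z (Γ p Y T)) x := (dΓ1 Z).clm_apply (dΓ2 Y T)
  rw [e, fderiv_fun_sub ((d1.fun_sub d2).fun_add d3) d4, fderiv_fun_add (d1.fun_sub d2) d3, fderiv_fun_sub d1 d2]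
  have e3 : fderiv ℝ (fun p => Γ p Y (Γ p Z T)) x =
      (Γ x Y).comp (fderiv ℝ (fun p => Γ p Z T) x) + (fderiv ℝ (fun p => Γ p Y) x).flip (Γ x Z T) :=
    fderiv_clm_apply (dΓ1 Y) (dΓ2 Z T)
  have e4 : fderiv ℝ (fun p => Γ p Z (Γ p Y T)) x =
      (Γ x Z).comp (fderiv ℝ (fun p => Γ p Y T) x) + (fderiv ℝ (fun p => Γ p Z) x).flip (Γ x Y T) :=
    fderiv_clm_apply (dΓ1 Z) (dΓ2 Y T)
  simp only [ContinuousLinearMap.sub_apply, ContinuousLinearMap.add_apply, e3, e4,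
    ContinuousLinearMap.comp_apply, ContinuousLinearMap.flip_apply,
    fderiv_G'₃ hΓ, fderiv_Γ₂ hΓ, fderiv_Γ₁ hΓ]
  abel



lemma gamma_symm (hs1 : ∀ x X Y Z, Omega n (Γ x X Y) Z = Omega n (Γ x Y X) Z)
    (x A B : Fin (2*n) → ℝ) : Γ x A B = Γ x B A := by
  have h : ∀ w, Omega n (Γ x A B - Γ x B A) w = 0 := fun w => by
    rw [omega_sub_left, hs1 x A B w]; ring
  exact sub_eq_zero.mp (omega_nondeg n _ h)

lemma omega_parallel (hs2 : ∀ x X Y Z, Omega n (Γ x X Y) Z = Omega n (Γ x X Z) Y)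
    (x X A B : Fin (2*n) → ℝ) : Omega n A (Γ x X B) = - Omega n (Γ x X A) B := by
  rw [omega_swap n A (Γ x X B), hs2 x X B A]


lemma bianchi (hΓ : ContDiff ℝ (⊤ : ℕ∞) Γ) (hs1 : ∀ x X Y Z, Omega n (Γ x X Y) Z = Omega n (Γ x Y X) Z) (x X Y Z T : Fin (2*n) → ℝ) :
    (fderiv ℝ (fun p => curv n Γ p Y Z T) x X - curv n Γ x (Γ x X Y) Z T
      - curv n Γ x Y (Γ x X Z) T - curv n Γ x Y Z (Γ x X T) + Γ x X (curv n Γ x Y Z T))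
    + (fderiv ℝ (fun p => curv n Γ p Z X T) x Y - curv n Γ x (Γ x Y Z) X T
      - curv n Γ x Z (Γ x Y X) T - curv n Γ x Z X (Γ x Y T) + Γ x Y (curv n Γ x Z X T))
    + (fderiv ℝ (fun p => curv n Γ p X Y T) x Z - curv n Γ x (Γ x Z X) Y T
      - curv n Γ x X (Γ x Z Y) T - curv n Γ x X Y (Γ x Z T) + Γ x Z (curv n Γ x X Y T)) = 0 := by
  rw [curvT_fderiv hΓ x X Y Z T, curvT_fderiv hΓ x Y Z X T, curvT_fderiv hΓ x Z X Y T]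
  simp only [curv_apply, map_add, map_sub]
  rw [show Γ x Y X = Γ x X Y from gamma_symm hs1 x Y X,
    show Γ x Z Y = Γ x Y Z from gamma_symm hs1 x Z Y,
    show Γ x Z X = Γ x X Z from gamma_symm hs1 x Z X,
    show fderiv ℝ (fderiv ℝ Γ) x Y X = fderiv ℝ (fderiv ℝ Γ) x X Y from (Hsym hΓ x X Y).symm,
    show fderiv ℝ (fderiv ℝ Γ) x Z Y = fderiv ℝ (fderiv ℝ Γ) x Y Z from (Hsym hΓ x Y Z).symm,
    show fderiv ℝ (fderiv ℝ Γ) x Z X = fderiv ℝ (fderiv ℝ Γ) x X Z from (Hsym hΓ x X Z).symm]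
  abel




lemma hasFDerivAt_omega_curv (hΓ : ContDiff ℝ (⊤ : ℕ∞) Γ) (x Y Z T S : Fin (2*n) → ℝ) :
    HasFDerivAt (fun p => Omega n (curv n Γ p Y Z T) S)
      ((omegaCLM n S).comp (fderiv ℝ (fun p => curv n Γ p Y Z T) x)) x := by
  have h1 : HasFDerivAt (fun p => curv n Γ p Y Z T)
      (fderiv ℝ (fun p => curv n Γ p Y Z T) x) x :=
    ((contDiff_curvT hΓ Y Z T).differentiable one_le_coe_top x).hasFDerivAt
  have h2 := (omegaCLM n S).hasFDerivAt.comp x h1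
  have e : (omegaCLM n S) ∘ (fun p => curv n Γ p Y Z T)
      = fun p => Omega n (curv n Γ p Y Z T) S := by
    funext p; simp [Function.comp, omegaCLM_apply]
  rwa [e] at h2

lemma hasFDerivAt_Epart (hΓ : ContDiff ℝ (⊤ : ℕ∞) Γ) (x Y Z T S : Fin (2*n) → ℝ) :
    HasFDerivAt (fun p => Epart n Γ p Y Z T S)
      ((-(1/(2*((n:ℝ)+1)))) • ((((((2 * Omega n Y Z) • fderiv ℝ (fun p => ricci n Γ p T S) x
        + (Omega n Y T) • fderiv ℝ (fun p => ricci n Γ p Z S) x)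
        + (Omega n Y S) • fderiv ℝ (fun p => ricci n Γ p Z T) x)
        - (Omega n Z T) • fderiv ℝ (fun p => ricci n Γ p Y S) x)
        - (Omega n Z S) • fderiv ℝ (fun p => ricci n Γ p Y T) x))) x := by
  have hr : ∀ A B : Fin (2*n) → ℝ, HasFDerivAt (fun p => ricci n Γ p A B)
      (fderiv ℝ (fun p => ricci n Γ p A B) x) x := fun A B =>
    ((contDiff_ricci hΓ A B).differentiable one_le_coe_top x).hasFDerivAt
  exact (((((hr T S).const_mul (2 * Omega n Y Z)).add ((hr Z S).const_mul (Omega n Y T))).add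
    ((hr Z T).const_mul (Omega n Y S))).sub ((hr Y S).const_mul (Omega n Z T))).sub
    ((hr Y T).const_mul (Omega n Z S)) |>.const_mul (-(1/(2*((n:ℝ)+1))))


lemma nablaW_split (hΓ : ContDiff ℝ (⊤ : ℕ∞) Γ) (hs2 : ∀ x X Y Z, Omega n (Γ x X Y) Z = Omega n (Γ x X Z) Y) (x X Y Z T S : Fin (2*n) → ℝ) :
    nablaW n Γ x X Y Z T S =
      Omega n (fderiv ℝ (fun p => curv n Γ p Y Z T) x X - curv n Γ x (Γ x X Y) Z T
        - curv n Γ x Y (Γ x X Z) T - curv n Γ x Y Z (Γ x X T) + Γ x X (curv n Γ x Y Z T)) S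
      - (-(1/(2*((n:ℝ)+1))) * (2 * Omega n Y Z * nablaRicci n Γ x X T S
          + Omega n Y T * nablaRicci n Γ x X Z S + Omega n Y S * nablaRicci n Γ x X Z T
          - Omega n Z T * nablaRicci n Γ x X Y S - Omega n Z S * nablaRicci n Γ x X Y T)) := by
  have hsplit : fderiv ℝ (fun p => Wpart n Γ p Y Z T S) x X =
      Omega n (fderiv ℝ (fun p => curv n Γ p Y Z T) x X) S
      - (-(1/(2*((n:ℝ)+1))) * (2 * Omega n Y Z * fderiv ℝ (fun p => ricci n Γ p T S) x X
          + Omega n Y T * fderiv ℝ (fun p => ricci n Γ p Z S) x X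
          + Omega n Y S * fderiv ℝ (fun p => ricci n Γ p Z T) x X
          - Omega n Z T * fderiv ℝ (fun p => ricci n Γ p Y S) x X
          - Omega n Z S * fderiv ℝ (fun p => ricci n Γ p Y T) x X)) := by
    have h := ((hasFDerivAt_omega_curv hΓ x Y Z T S).sub (hasFDerivAt_Epart hΓ x Y Z T S)).fderiv
    have e : (fun p => Omega n (curv n Γ p Y Z T) S) - (fun p => Epart n Γ p Y Z T S)
        = fun p => Wpart n Γ p Y Z T S := by
      funext p; simp [Wpart]
    rw [e] at h
    rw [h]
    simp [ContinuousLinearMap.sub_apply, ContinuousLinearMap.add_apply,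
      ContinuousLinearMap.smul_apply, ContinuousLinearMap.comp_apply, smul_eq_mul,
      omegaCLM_apply]
  unfold nablaW
  rw [hsplit]
  simp only [Wpart, Epart, nablaRicci,
    omega_sub_left, omega_add_left,
    omega_parallel hs2 x X (curv n Γ x Y Z T) S,
    omega_parallel hs2 x X Y Z, omega_parallel hs2 x X Y T, omega_parallel hs2 x X Y S,
    omega_parallel hs2 x X Z T, omega_parallel hs2 x X Z S]
  ring


end SymplecticWeylAux

open SymplecticWeylAux in
/-- If a symplectic connection `∇ = ∇⁰ + Γ` on `(ℝ^{2n},Ω)`, `n ≥ 2`,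
admits a smooth 1-form `u` with `(∇_X r)(x)(Y,Z) = (1/(2n+1))·(Ω(X,Y)u(x)(Z) + Ω(X,Z)u(x)(Y))`,
then the 'Weyl' part `W = R − E` satisfies the cyclic identity
`(∇_X W)(Y,Z;T,S) + (∇_Y W)(Z,X;T,S) + (∇_Z W)(X,Y;T,S) = 0`. -/
theorem weyl_cyclic_identity (n : ℕ) (hn : 2 ≤ n)
    (Γ : (Fin (2*n) → ℝ) → (Fin (2*n) → ℝ) →L[ℝ] (Fin (2*n) → ℝ) →L[ℝ] (Fin (2*n) → ℝ))
    (hΓ : ContDiff ℝ (⊤ : ℕ∞) Γ)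
    (hsym₁ : ∀ x X Y Z, Omega n (Γ x X Y) Z = Omega n (Γ x Y X) Z)
    (hsym₂ : ∀ x X Y Z, Omega n (Γ x X Y) Z = Omega n (Γ x X Z) Y)
    (u : (Fin (2*n) → ℝ) → ((Fin (2*n) → ℝ) →L[ℝ] ℝ))
    (hu : ContDiff ℝ (⊤ : ℕ∞) u)
    (hur : ∀ x X Y Z, nablaRicci n Γ x X Y Z =
      (1/(2*(n:ℝ)+1)) * (Omega n X Y * u x Z + Omega n X Z * u x Y)) :
    ∀ x X Y Z T S,
      nablaW n Γ x X Y Z T S + nablaW n Γ x Y Z X T S + nablaW n Γ x Z X Y T S = 0 := by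
  intro x X Y Z T S
  rw [nablaW_split hΓ hsym₂ x X Y Z T S, nablaW_split hΓ hsym₂ x Y Z X T S,
    nablaW_split hΓ hsym₂ x Z X Y T S]
  have h1 := congrArg (omegaCLM n S) (bianchi hΓ hsym₁ x X Y Z T)
  rw [map_add, map_add, map_zero] at h1
  simp only [omegaCLM_apply] at h1
  rw [hur x X T S, hur x X Z S, hur x X Z T, hur x X Y S, hur x X Y T,
    hur x Y T S, hur x Y X S, hur x Y X T, hur x Y Z S, hur x Y Z T,
    hur x Z T S, hur x Z Y S, hur x Z Y T, hur x Z X S, hur x Z X T,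
    omega_swap n Y X, omega_swap n Z X, omega_swap n Z Y]
  linear_combination h1
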